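/- Let G be a totally disconnected locally compact Hausdorff topological group, g ∈ G, and U a compact open subgroup that is tidy above for g. Then for every n ≥ 1, the n-fold set product (UgU)ⁿ equals Ug ⁿU, and (Ug⁻¹U)ⁿ equals Ug⁻ⁿU (all products being pointwise products of subsets of G). -/

import Mathlib

open MeasureTheory Pointwise

variable {G : Type*}

/-- The conjugate subgroup `gUg⁻¹`. -/
def conjSubgroup [Group G] (g : G) (U : Subgroup G) : Subgroup G :=
  U.map (MulAut.conj g).toMonoidHom

/-- A subgroup is compact open if its carrier set is compact and open. -/
def Subgroup.IsCompactOpen [Group G] [TopologicalSpace G] (U : Subgroup G) : Prop :=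
  IsCompact (U : Set G) ∧ IsOpen (U : Set G)

/-- `U₊ = ⋂_{n ≥ 0} gⁿ U g⁻ⁿ`. -/
def plusSubgroup [Group G] (g : G) (U : Subgroup G) : Subgroup G :=
  ⨅ n : ℕ, conjSubgroup (g ^ n) U

/-- `U₋ = ⋂_{n ≥ 0} g⁻ⁿ U gⁿ`. -/
def minusSubgroup [Group G] (g : G) (U : Subgroup G) : Subgroup G :=
  ⨅ n : ℕ, conjSubgroup (g⁻¹ ^ n) U

/-- `U` is tidy above for `g` if `[gU₊g⁻¹ : U₊] = [gUg⁻¹ : gUg⁻¹ ∩ U]`. -/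
def TidyAbove [Group G] (g : G) (U : Subgroup G) : Prop :=
  (plusSubgroup g U).relIndex (conjSubgroup g (plusSubgroup g U)) = U.relIndex (conjSubgroup g U)

/-- `U₊₊ = ⋃_{n ≥ 0} gⁿ U₊ g⁻ⁿ` as a set. -/
def plusPlusSet [Group G] (g : G) (U : Subgroup G) : Set G :=
  ⋃ n : ℕ, ((conjSubgroup (g ^ n) (plusSubgroup g U) : Subgroup G) : Set G)

/-- `U₋₋ = ⋃_{n ≥ 0} g⁻ⁿ U₋ gⁿ` as a set. -/
def minusMinusSet [Group G] (g : G) (U : Subgroup G) : Set G :=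
  ⋃ n : ℕ, ((conjSubgroup (g⁻¹ ^ n) (minusSubgroup g U) : Subgroup G) : Set G)

/-- `U` is tidy below for `g` if `U₊₊` and `U₋₋` are closed. -/
def TidyBelow [Group G] [TopologicalSpace G] (g : G) (U : Subgroup G) : Prop :=
  IsClosed (plusPlusSet g U) ∧ IsClosed (minusMinusSet g U)

/-- `U` is tidy for `g` if it is tidy above and tidy below for `g`. -/
def Tidy [Group G] [TopologicalSpace G] (g : G) (U : Subgroup G) : Prop :=
  TidyAbove g U ∧ TidyBelow g U

lemma mem_conjSubgroup [Group G] {h x : G} {U : Subgroup G} :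
    x ∈ conjSubgroup h U ↔ h⁻¹ * x * h ∈ U := by
  constructor
  · rintro ⟨u, hu, rfl⟩
    simp only [MulEquiv.toMonoidHom_eq_coe, MonoidHom.coe_coe, MulAut.conj_apply]
    simpa [mul_assoc] using hu
  · intro hx
    refine ⟨h⁻¹ * x * h, hx, ?_⟩
    simp only [MulEquiv.toMonoidHom_eq_coe, MonoidHom.coe_coe, MulAut.conj_apply]
    group

lemma mem_plusSubgroup [Group G] {g x : G} {U : Subgroup G} :
    x ∈ plusSubgroup g U ↔ ∀ n : ℕ, (g ^ n)⁻¹ * x * g ^ n ∈ U := by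
  simp [plusSubgroup, Subgroup.mem_iInf, mem_conjSubgroup]

lemma mem_minusSubgroup [Group G] {g x : G} {U : Subgroup G} :
    x ∈ minusSubgroup g U ↔ ∀ n : ℕ, g ^ n * x * (g ^ n)⁻¹ ∈ U := by
  simp only [minusSubgroup, Subgroup.mem_iInf, mem_conjSubgroup, inv_pow, inv_inv]

lemma plus_le [Group G] (g : G) (U : Subgroup G) : plusSubgroup g U ≤ U := by
  intro x hx
  simpa using (mem_plusSubgroup.mp hx) 0

lemma minus_le [Group G] (g : G) (U : Subgroup G) : minusSubgroup g U ≤ U := by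
  intro x hx
  simpa using (mem_minusSubgroup.mp hx) 0

lemma conj_mem_plus [Group G] {g x : G} {U : Subgroup G} (hx : x ∈ plusSubgroup g U) :
    g⁻¹ * x * g ∈ plusSubgroup g U := by
  rw [mem_plusSubgroup] at hx ⊢
  intro n
  have := hx (n + 1)
  rw [pow_succ] at this
  have e : (g ^ n)⁻¹ * (g⁻¹ * x * g) * g ^ n = (g ^ n * g)⁻¹ * x * (g ^ n * g) := by group
  rw [e]; exact this

lemma conj_mem_minus [Group G] {g x : G} {U : Subgroup G} (hx : x ∈ minusSubgroup g U) :
    g * x * g⁻¹ ∈ minusSubgroup g U := by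
  rw [mem_minusSubgroup] at hx ⊢
  intro n
  have := hx (n + 1)
  rw [pow_succ'] at this
  have e : g ^ n * (g * x * g⁻¹) * (g ^ n)⁻¹ = g * g ^ n * x * (g * g ^ n)⁻¹ := by group
  rw [e]; exact this

lemma conj_pow_mem_plus [Group G] {g x : G} {U : Subgroup G} (m : ℕ)
    (hx : x ∈ plusSubgroup g U) : (g ^ m)⁻¹ * x * g ^ m ∈ plusSubgroup g U := by
  induction m with
  | zero => simpa using hx
  | succ k ih =>
      have := conj_mem_plus ih
      have e : (g ^ (k + 1))⁻¹ * x * g ^ (k + 1)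
          = g⁻¹ * ((g ^ k)⁻¹ * x * g ^ k) * g := by rw [pow_succ]; group
      rw [e]; exact this

lemma conj_pow_mem_minus [Group G] {g x : G} {U : Subgroup G} (m : ℕ)
    (hx : x ∈ minusSubgroup g U) : g ^ m * x * (g ^ m)⁻¹ ∈ minusSubgroup g U := by
  induction m with
  | zero => simpa using hx
  | succ k ih =>
      have := conj_mem_minus ih
      have e : g ^ (k + 1) * x * (g ^ (k + 1))⁻¹
          = g * (g ^ k * x * (g ^ k)⁻¹) * g⁻¹ := by rw [pow_succ']; group
      rw [e]; exact this

lemma plus_le_conj [Group G] (g : G) (U : Subgroup G) :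
    plusSubgroup g U ≤ conjSubgroup g (plusSubgroup g U) := by
  intro x hx
  rw [mem_conjSubgroup]
  exact conj_mem_plus hx

lemma conj_plus_inf_eq [Group G] (g : G) (U : Subgroup G) :
    conjSubgroup g (plusSubgroup g U) ⊓ U = plusSubgroup g U := by
  ext x
  simp only [Subgroup.mem_inf, mem_conjSubgroup, mem_plusSubgroup]
  constructor
  · rintro ⟨h1, h2⟩ n
    cases n with
    | zero => simpa using h2
    | succ k =>
        have := h1 k
        have e : (g ^ (k + 1))⁻¹ * x * g ^ (k + 1)
            = (g ^ k)⁻¹ * (g⁻¹ * x * g) * g ^ k := by rw [pow_succ]; group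
        rw [e]; exact this
  · intro h
    refine ⟨fun n => ?_, by simpa using h 0⟩
    have := h (n + 1)
    have e : (g ^ n)⁻¹ * (g⁻¹ * x * g) * g ^ n
        = (g ^ (n + 1))⁻¹ * x * g ^ (n + 1) := by rw [pow_succ]; group
    rw [e]; exact this

lemma coe_conjSubgroup [Group G] (h : G) (U : Subgroup G) :
    (conjSubgroup h U : Set G) = (fun x => h⁻¹ * x * h) ⁻¹' (U : Set G) := by
  ext x; exact mem_conjSubgroup

lemma conjSubgroup_isOpen [Group G] [TopologicalSpace G] [IsTopologicalGroup G]
    (h : G) {U : Subgroup G} (hO : IsOpen (U : Set G)) :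
    IsOpen ((conjSubgroup h U : Subgroup G) : Set G) := by
  rw [coe_conjSubgroup]
  exact hO.preimage (by continuity)

lemma conjSubgroup_isCompact [Group G] [TopologicalSpace G] [IsTopologicalGroup G]
    (h : G) {U : Subgroup G} (hC : IsCompact (U : Set G)) :
    IsCompact ((conjSubgroup h U : Subgroup G) : Set G) := by
  have : ((conjSubgroup h U : Subgroup G) : Set G) = (fun x => h * x * h⁻¹) '' (U : Set G) := by
    ext x
    simp only [Set.mem_image, mem_conjSubgroup, SetLike.mem_coe]
    constructor
    · intro hx
      exact ⟨h⁻¹ * x * h, hx, by group⟩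
    · rintro ⟨u, hu, rfl⟩
      have e : h⁻¹ * (h * u * h⁻¹) * h = u := by group
      rw [e]; exact hu
  rw [this]
  exact hC.image (by continuity)

lemma finite_quot [Group G] [TopologicalSpace G] [IsTopologicalGroup G] [T2Space G]
    (g : G) {U : Subgroup G} (hC : IsCompact (U : Set G)) (hO : IsOpen (U : Set G)) :
    Finite (conjSubgroup g U ⧸ U.subgroupOf (conjSubgroup g U)) := by
  set K := conjSubgroup g U
  have : CompactSpace K := isCompact_iff_compactSpace.mp (conjSubgroup_isCompact g hC)
  apply Subgroup.quotient_finite_of_isOpen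
  have : ((U.subgroupOf K : Subgroup K) : Set K) = (Subtype.val : K → G) ⁻¹' (U : Set G) := by
    ext x; rfl
  rw [this]
  exact hO.preimage continuous_subtype_val


lemma stepD [Group G] [TopologicalSpace G] [IsTopologicalGroup G] [T2Space G]
    {g : G} {U : Subgroup G} (hC : IsCompact (U : Set G)) (hO : IsOpen (U : Set G))
    (hta : TidyAbove g U) :
    ∀ w ∈ U, ∃ a ∈ plusSubgroup g U, ∃ z ∈ U, w = a * z ∧ g * z * g⁻¹ ∈ U := by
  classical
  set P := plusSubgroup g U with hP
  set K := conjSubgroup g U with hK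
  set Kp := conjSubgroup g P with hKp
  have hle : Kp ≤ K := Subgroup.map_mono (plus_le g U)
  have hcomap : P.subgroupOf Kp ≤ (U.subgroupOf K).comap (Subgroup.inclusion hle) := by
    intro x hx
    simp only [Subgroup.mem_comap, Subgroup.mem_subgroupOf, Subgroup.coe_inclusion] at *
    exact plus_le g U hx
  let f : Kp ⧸ P.subgroupOf Kp → K ⧸ U.subgroupOf K :=
    Quotient.map' (Subgroup.inclusion hle) (by
      intro a b hab
      rw [QuotientGroup.leftRel_apply] at hab ⊢
      rw [← map_inv, ← map_mul]
      simp only [Subgroup.mem_subgroupOf, Subgroup.coe_inclusion] at *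
      exact plus_le g U hab)
  have hfmk : ∀ x : Kp, f (QuotientGroup.mk x) = QuotientGroup.mk (Subgroup.inclusion hle x) :=
    fun x => rfl
  have hfin : Finite (K ⧸ U.subgroupOf K) := finite_quot g hC hO
  have hinj : Function.Injective f := by
    intro a b
    induction a using QuotientGroup.induction_on with
    | H x =>
    induction b using QuotientGroup.induction_on with
    | H y =>
    intro hxy
    rw [hfmk, hfmk] at hxy
    rw [QuotientGroup.eq] at hxy ⊢
    rw [Subgroup.mem_subgroupOf] at hxy ⊢
    have hmemU : ((x⁻¹ * y : Kp) : G) ∈ U := by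
      simpa using hxy
    have hmemKp : ((x⁻¹ * y : Kp) : G) ∈ Kp := (x⁻¹ * y).2
    show ((x⁻¹ * y : Kp) : G) ∈ plusSubgroup g U
    rw [← conj_plus_inf_eq g U]
    exact ⟨hmemKp, hmemU⟩
  have hcard : Nat.card (Kp ⧸ P.subgroupOf Kp) = Nat.card (K ⧸ U.subgroupOf K) := hta
  have hbij : Function.Bijective f :=
    (Nat.bijective_iff_injective_and_card f).mpr ⟨hinj, hcard⟩
  intro w hw
  have hkK : g * w * g⁻¹ ∈ K := by
    rw [hK, mem_conjSubgroup]
    have e : g⁻¹ * (g * w * g⁻¹) * g = w := by group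
    rw [e]; exact hw
  obtain ⟨q, hq⟩ := hbij.2 (QuotientGroup.mk ⟨g * w * g⁻¹, hkK⟩)
  induction q using QuotientGroup.induction_on with
  | H x =>
  rw [hfmk] at hq
  rw [QuotientGroup.eq, Subgroup.mem_subgroupOf] at hq
  have hq' : ((x : G))⁻¹ * (g * w * g⁻¹) ∈ U := by simpa using hq
  have hxKp : (x : G) ∈ Kp := x.2
  refine ⟨g⁻¹ * (x : G) * g, ?_, g⁻¹ * (((x : G))⁻¹ * (g * w * g⁻¹)) * g, ?_, ?_, ?_⟩
  · exact mem_conjSubgroup.mp hxKp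
  · -- z ∈ U : the element (x⁻¹ * (gwg⁻¹)) is in K, so conjugate is in U
    have hmK : ((x : G))⁻¹ * (g * w * g⁻¹) ∈ K := K.mul_mem (K.inv_mem (hle hxKp)) hkK
    rw [hK, mem_conjSubgroup] at hmK
    exact hmK
  · group
  · have e : g * (g⁻¹ * (((x : G))⁻¹ * (g * w * g⁻¹)) * g) * g⁻¹
        = ((x : G))⁻¹ * (g * w * g⁻¹) := by group
    rw [e]; exact hq'

lemma approx [Group G] [TopologicalSpace G] [IsTopologicalGroup G] [T2Space G]
    {g : G} {U : Subgroup G} (hC : IsCompact (U : Set G)) (hO : IsOpen (U : Set G))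
    (hta : TidyAbove g U) :
    ∀ n : ℕ, ∀ u ∈ U, ∃ a ∈ plusSubgroup g U, ∃ v : G,
      u = a * v ∧ ∀ k ≤ n, g ^ k * v * (g ^ k)⁻¹ ∈ U := by
  intro n
  induction n with
  | zero =>
      intro u hu
      refine ⟨1, one_mem _, u, by group, ?_⟩
      intro k hk
      interval_cases k
      simpa using hu
  | succ n ih =>
      intro u hu
      obtain ⟨a, ha, v, huv, hv⟩ := ih u hu
      have hwU : g ^ n * v * (g ^ n)⁻¹ ∈ U := hv n le_rfl
      obtain ⟨b, hb, z, hz, hwz, hgz⟩ := stepD hC hO hta _ hwU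
      have hvz : v = ((g ^ n)⁻¹ * b * g ^ n) * ((g ^ n)⁻¹ * z * g ^ n) := by
        have : (g ^ n)⁻¹ * (g ^ n * v * (g ^ n)⁻¹) * g ^ n
            = ((g ^ n)⁻¹ * b * g ^ n) * ((g ^ n)⁻¹ * z * g ^ n) := by
          rw [hwz]; group
        rw [← this]; group
      refine ⟨a * ((g ^ n)⁻¹ * b * g ^ n),
        (plusSubgroup g U).mul_mem ha (conj_pow_mem_plus n hb),
        (g ^ n)⁻¹ * z * g ^ n, by rw [huv, hvz]; group, ?_⟩
      intro k hk
      rcases Nat.eq_or_lt_of_le hk with hk1 | hk1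
      · subst hk1
        have e : g ^ (n + 1) * ((g ^ n)⁻¹ * z * g ^ n) * (g ^ (n + 1))⁻¹
            = g * z * g⁻¹ := by
          rw [pow_succ']; group
        rw [e]; exact hgz
      · have hkn : k ≤ n := Nat.lt_succ_iff.mp hk1
        obtain ⟨m, rfl⟩ := Nat.exists_eq_add_of_le hkn
        have hbm : (g ^ m)⁻¹ * b * g ^ m ∈ U := plus_le g U (conj_pow_mem_plus m hb)
        have hzv : z = b⁻¹ * (g ^ (k + m) * v * (g ^ (k + m))⁻¹) := by
          rw [hwz]; group
        have e : g ^ k * ((g ^ (k + m))⁻¹ * z * g ^ (k + m)) * (g ^ k)⁻¹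
            = ((g ^ m)⁻¹ * b * g ^ m)⁻¹ * (g ^ k * v * (g ^ k)⁻¹) := by
          rw [hzv, pow_add]; group
        rw [e]
        exact U.mul_mem (U.inv_mem hbm) (hv k hkn)

lemma plus_isCompact [Group G] [TopologicalSpace G] [IsTopologicalGroup G] [T2Space G]
    (g : G) {U : Subgroup G} (hC : IsCompact (U : Set G)) :
    IsCompact ((plusSubgroup g U : Subgroup G) : Set G) := by
  have hclosed : IsClosed ((plusSubgroup g U : Subgroup G) : Set G) := by
    have : ((plusSubgroup g U : Subgroup G) : Set G)
        = ⋂ n : ℕ, ((conjSubgroup (g ^ n) U : Subgroup G) : Set G) := by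
      ext x
      simp [plusSubgroup, Subgroup.mem_iInf]
    rw [this]
    exact isClosed_iInter fun n => by
      rw [coe_conjSubgroup]
      exact hC.isClosed.preimage (by continuity)
  exact hC.of_isClosed_subset hclosed (plus_le g U)

lemma U_eq_plus_mul_minus [Group G] [TopologicalSpace G] [IsTopologicalGroup G] [T2Space G]
    {g : G} {U : Subgroup G} (hC : IsCompact (U : Set G)) (hO : IsOpen (U : Set G))
    (hta : TidyAbove g U) :
    (U : Set G) = (plusSubgroup g U : Subgroup G) * (minusSubgroup g U : Subgroup G) := by
  apply Set.Subset.antisymm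
  · intro u hu
    set P := plusSubgroup g U with hPdef
    set S : ℕ → Set G := fun n =>
      (P : Set G) ∩ {a : G | ∀ k ≤ n, g ^ k * (a⁻¹ * u) * (g ^ k)⁻¹ ∈ (U : Set G)} with hSdef
    have hdec : ∀ n, S (n + 1) ⊆ S n := by
      intro n x hx
      exact ⟨hx.1, fun k hk => hx.2 k (hk.trans (Nat.le_succ n))⟩
    have hne : ∀ n, (S n).Nonempty := by
      intro n
      obtain ⟨a, ha, v, huv, hv⟩ := approx hC hO hta n u hu
      refine ⟨a, ha, fun k hk => ?_⟩
      have : a⁻¹ * u = v := by rw [huv]; group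
      rw [this]
      exact hv k hk
    have hclosed : ∀ n, IsClosed (S n) := by
      intro n
      apply IsClosed.inter (plus_isCompact g hC).isClosed
      have : {a : G | ∀ k ≤ n, g ^ k * (a⁻¹ * u) * (g ^ k)⁻¹ ∈ (U : Set G)}
          = ⋂ k : ℕ, ⋂ _ : k ≤ n, (fun a : G => g ^ k * (a⁻¹ * u) * (g ^ k)⁻¹) ⁻¹' (U : Set G) := by
        ext a; simp
      rw [this]
      exact isClosed_iInter fun k => isClosed_iInter fun _ =>
        hC.isClosed.preimage (by continuity)
    have hcpt : IsCompact (S 0) :=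
      ((plus_isCompact g hC).of_isClosed_subset (hclosed 0) (Set.inter_subset_left))
    obtain ⟨a, ha⟩ := IsCompact.nonempty_iInter_of_sequence_nonempty_isCompact_isClosed
      S hdec hne hcpt hclosed
    have haP : a ∈ P := (Set.mem_iInter.mp ha 0).1
    have haM : a⁻¹ * u ∈ minusSubgroup g U := by
      rw [mem_minusSubgroup]
      intro k
      exact (Set.mem_iInter.mp ha k).2 k le_rfl
    exact ⟨a, haP, a⁻¹ * u, haM, by group⟩
  · rintro x ⟨a, ha, b, hb, rfl⟩
    exact U.mul_mem (plus_le g U ha) (minus_le g U hb)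

lemma U_eq_minus_mul_plus [Group G] [TopologicalSpace G] [IsTopologicalGroup G] [T2Space G]
    {g : G} {U : Subgroup G} (hC : IsCompact (U : Set G)) (hO : IsOpen (U : Set G))
    (hta : TidyAbove g U) :
    (U : Set G) = (minusSubgroup g U : Subgroup G) * (plusSubgroup g U : Subgroup G) := by
  apply Set.Subset.antisymm
  · intro u hu
    have : u⁻¹ ∈ (U : Set G) := U.inv_mem hu
    rw [U_eq_plus_mul_minus hC hO hta] at this
    obtain ⟨a, ha, b, hb, hab⟩ := this
    refine ⟨b⁻¹, (minusSubgroup g U).inv_mem hb, a⁻¹, (plusSubgroup g U).inv_mem ha, ?_⟩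
    have hab' : a * b = u⁻¹ := hab
    have : u = (a * b)⁻¹ := by rw [hab']; group
    rw [this]; group
  · rintro x ⟨a, ha, b, hb, rfl⟩
    exact U.mul_mem (minus_le g U ha) (plus_le g U hb)

lemma exists_of_mem_mul3 {A B C : Set G} [Group G] {x : G} (h : x ∈ A * B * C) :
    ∃ a ∈ A, ∃ b ∈ B, ∃ c ∈ C, x = a * b * c := by
  obtain ⟨y, hy, c, hc, rfl⟩ := h
  obtain ⟨a, ha, b, hb, rfl⟩ := hy
  exact ⟨a, ha, b, hb, c, hc, rfl⟩

lemma genpow [Group G] (U : Subgroup G) (g : G)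
    (hkey : ∀ n : ℕ, ∀ v ∈ U, ∃ u1 ∈ U, ∃ u2 ∈ U,
      g ^ n * v * g = u1 * g ^ (n + 1) * u2) :
    ∀ n : ℕ, 1 ≤ n →
      ((U : Set G) * {g} * (U : Set G)) ^ n = (U : Set G) * {g ^ n} * (U : Set G) := by
  intro n hn
  induction n, hn using Nat.le_induction with
  | base => rw [pow_one, pow_one]
  | succ n hn ih =>
      rw [pow_succ, ih]
      apply Set.Subset.antisymm
      · intro x hx
        obtain ⟨p, hp, q, hq, rfl⟩ := hx
        obtain ⟨u1, hu1, gn, hgn, u2, hu2, rfl⟩ := exists_of_mem_mul3 hp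
        obtain ⟨u3, hu3, g1, hg1, u4, hu4, rfl⟩ := exists_of_mem_mul3 hq
        rw [Set.mem_singleton_iff] at hgn hg1
        rw [hgn, hg1]
        beta_reduce
        obtain ⟨w1, hw1, w2, hw2, hkey'⟩ := hkey n (u2 * u3) (U.mul_mem hu2 hu3)
        have e : u1 * g ^ n * u2 * (u3 * g * u4)
            = u1 * (g ^ n * (u2 * u3) * g) * u4 := by group
        rw [e, hkey']
        have e2 : u1 * (w1 * g ^ (n + 1) * w2) * u4
            = (u1 * w1) * g ^ (n + 1) * (w2 * u4) := by group
        rw [e2]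
        exact Set.mul_mem_mul (Set.mul_mem_mul (U.mul_mem hu1 hw1) rfl) (U.mul_mem hw2 hu4)
      · intro x hx
        obtain ⟨u1, hu1, gn, hgn, u2, hu2, rfl⟩ := exists_of_mem_mul3 hx
        rw [Set.mem_singleton_iff] at hgn
        rw [hgn]
        have e : u1 * g ^ (n + 1) * u2 = (u1 * g ^ n * 1) * (1 * g * u2) := by
          rw [pow_succ]; group
        rw [e]
        exact Set.mul_mem_mul
          (Set.mul_mem_mul (Set.mul_mem_mul hu1 rfl) (one_mem U))
          (Set.mul_mem_mul (Set.mul_mem_mul (one_mem U) rfl) hu2)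

/-- If `U` is tidy above for `g`, then `(UgU)ⁿ = UgⁿU` and
`(Ug⁻¹U)ⁿ = Ug⁻ⁿU` for all `n ≥ 1`. -/
theorem double_coset_power
    [Group G] [TopologicalSpace G] [IsTopologicalGroup G] [LocallyCompactSpace G] [T2Space G]
    [TotallyDisconnectedSpace G]
    (g : G) (U : Subgroup G) (hU : U.IsCompactOpen) (hta : TidyAbove g U) (n : ℕ) (hn : 1 ≤ n) :
    ((U : Set G) * {g} * (U : Set G)) ^ n = (U : Set G) * {g ^ n} * (U : Set G) ∧
    ((U : Set G) * {g⁻¹} * (U : Set G)) ^ n = (U : Set G) * {g⁻¹ ^ n} * (U : Set G) := by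
  obtain ⟨hC, hO⟩ := (hU : IsCompact (U : Set G) ∧ IsOpen (U : Set G))
  constructor
  · refine genpow U g ?_ n hn
    intro m v hv
    have hv' : v ∈ ((minusSubgroup g U : Subgroup G) : Set G) * ((plusSubgroup g U : Subgroup G) : Set G) := by
      rw [← U_eq_minus_mul_plus hC hO hta]; exact hv
    obtain ⟨a, ha, b, hb, hab⟩ := hv'
    have hab' : a * b = v := hab
    refine ⟨g ^ m * a * (g ^ m)⁻¹, minus_le g U (conj_pow_mem_minus m ha),
      g⁻¹ * b * g, plus_le g U (conj_mem_plus hb), ?_⟩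
    rw [← hab', pow_succ]; group
  · refine genpow U g⁻¹ ?_ n hn
    intro m v hv
    have hv' : v ∈ ((plusSubgroup g U : Subgroup G) : Set G) * ((minusSubgroup g U : Subgroup G) : Set G) := by
      rw [← U_eq_plus_mul_minus hC hO hta]; exact hv
    obtain ⟨b, hb, a, ha, hab⟩ := hv'
    have hab' : b * a = v := hab
    refine ⟨(g ^ m)⁻¹ * b * g ^ m, plus_le g U (conj_pow_mem_plus m hb),
      g * a * g⁻¹, minus_le g U (conj_mem_minus ha), ?_⟩
    rw [← hab', inv_pow, inv_pow, pow_succ]; group
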